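/- Let X ~ Poisson(x) be a Poisson random variable with mean x ≥ 0. Then for every natural number i, sqrt(x) · e^{-x} · x^i / i! ≤ 1/√(2e), i.e., σ_X · P(X = i) ≤ 1/√(2e). -/

import Mathlib

open Real

private lemma log_cubic_upper (u : ℝ) (hu : 0 ≤ u) :
    Real.log (1 + u) ≤ u - u ^ 2 / 2 + u ^ 3 / 3 := by
  set f : ℝ → ℝ := fun t => t - t ^ 2 / 2 + t ^ 3 / 3 - Real.log (1 + t) with hf
  have hder : ∀ t : ℝ, 0 ≤ t →
      HasDerivAt f (1 - 2 * t ^ 1 / 2 + 3 * t ^ 2 / 3 - (1 + t)⁻¹) t := by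
    intro t ht
    have h1t : (1 : ℝ) + t ≠ 0 := by positivity
    have hlog : HasDerivAt (fun s : ℝ => Real.log (1 + s)) ((1 + t)⁻¹ * 1) t := by
      exact (Real.hasDerivAt_log h1t).comp t ((hasDerivAt_id t).const_add 1)
    have := (((hasDerivAt_id t).sub ((hasDerivAt_pow 2 t).div_const 2)).add
      ((hasDerivAt_pow 3 t).div_const 3)).sub hlog
    exact this.congr_deriv (by norm_num)
  have hmono : MonotoneOn f (Set.Ici (0 : ℝ)) := by
    apply monotoneOn_of_deriv_nonneg (convex_Ici 0)
    · intro t ht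
      exact (hder t ht).continuousAt.continuousWithinAt
    · intro t ht
      rw [interior_Ici] at ht
      exact (hder t (le_of_lt ht)).differentiableAt.differentiableWithinAt
    · intro t ht
      rw [interior_Ici] at ht
      have ht' : (0:ℝ) < t := ht
      rw [(hder t ht'.le).deriv]
      have h1t : (0 : ℝ) < 1 + t := by linarith
      have : (1 + t)⁻¹ ≤ 1 - t + t ^ 2 := by
        rw [inv_le_iff_one_le_mul₀ h1t]
        nlinarith [pow_nonneg ht'.le 3]
      nlinarith
  have h0 : f 0 ≤ f u := hmono Set.self_mem_Ici hu hu
  simp only [hf] at h0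
  norm_num at h0
  linarith

private lemma log_cubic_lower (u : ℝ) (hu : 0 ≤ u) (hu2 : u ≤ 1 / 2) :
    -Real.log (1 - u) ≤ u + u ^ 2 / 2 + 2 / 3 * u ^ 3 := by
  set f : ℝ → ℝ := fun t => t + t ^ 2 / 2 + 2 / 3 * t ^ 3 + Real.log (1 - t) with hf
  have hder : ∀ t : ℝ, t ∈ Set.Icc (0 : ℝ) (1 / 2) →
      HasDerivAt f (1 + 2 * t ^ 1 / 2 + 2 / 3 * (3 * t ^ 2) + (1 - t)⁻¹ * (-1)) t := by
    intro t ht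
    have h1t : (1 : ℝ) - t ≠ 0 := by
      have := ht.2; intro h; nlinarith
    have hlog : HasDerivAt (fun s : ℝ => Real.log (1 - s)) ((1 - t)⁻¹ * (-1)) t := by
      exact (Real.hasDerivAt_log h1t).comp t (((hasDerivAt_id t).neg).const_add 1)
    have := (((hasDerivAt_id t).add ((hasDerivAt_pow 2 t).div_const 2)).add
      ((hasDerivAt_pow 3 t).const_mul (2/3))).add hlog
    exact this.congr_deriv (by norm_num)
  have hmono : MonotoneOn f (Set.Icc (0 : ℝ) (1 / 2)) := by
    apply monotoneOn_of_deriv_nonneg (convex_Icc 0 (1/2))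
    · intro t ht
      exact (hder t ht).continuousAt.continuousWithinAt
    · intro t ht
      rw [interior_Icc] at ht
      exact (hder t (Set.mem_Icc_of_Ioo ht)).differentiableAt.differentiableWithinAt
    · intro t ht
      rw [interior_Icc] at ht
      rw [(hder t (Set.mem_Icc_of_Ioo ht)).deriv]
      have h1t : (0 : ℝ) < 1 - t := by linarith [ht.2]
      have : (1 - t)⁻¹ ≤ 1 + t + 2 * t ^ 2 := by
        rw [inv_le_iff_one_le_mul₀ h1t]
        nlinarith [ht.1, ht.2, sq_nonneg t]
      nlinarith [ht.1]
  have h0 : f 0 ≤ f u := hmono (Set.mem_Icc.mpr ⟨le_refl 0, by norm_num⟩)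
    (Set.mem_Icc.mpr ⟨hu, hu2⟩) hu
  simp only [hf] at h0
  norm_num at h0
  linarith

private lemma core_ineq (u : ℝ) (hu : 0 ≤ u) (hu2 : u ≤ 1 / 2) :
    (1 + u) * Real.log (1 + u) - (1 - u) * Real.log (1 - u) ≤ 2 * u := by
  have A := log_cubic_upper u hu
  have B := log_cubic_lower u hu hu2
  have hA := mul_le_mul_of_nonneg_left A (by linarith : (0:ℝ) ≤ 1 + u)
  have hB := mul_le_mul_of_nonneg_left B (by linarith : (0:ℝ) ≤ 1 - u)
  nlinarith [pow_nonneg hu 4]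

private lemma key_log (n : ℝ) (hn : 1 ≤ n) :
    (n + 1/2) * Real.log (n + 1/2) ≤ 1 + Real.log n + (n - 1/2) * Real.log (n - 1/2) := by
  have hn0 : (0:ℝ) < n := by linarith
  have h2n : (0:ℝ) < 2 * n := by linarith
  have hu0 : (0:ℝ) < 1 / (2 * n) := by positivity
  have hu2 : 1 / (2 * n) ≤ 1 / 2 := by
    rw [div_le_div_iff₀ h2n (by norm_num)]; linarith
  have hcore := core_ineq (1 / (2 * n)) hu0.le hu2
  have l1 : Real.log (1 + 1 / (2 * n)) =
      Real.log (2 * n + 1) - (Real.log 2 + Real.log n) := by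
    rw [show (1 : ℝ) + 1 / (2 * n) = (2 * n + 1) / (2 * n) by field_simp,
      Real.log_div (by positivity) (by positivity), Real.log_mul two_ne_zero hn0.ne']
  have l2 : Real.log (1 - 1 / (2 * n)) =
      Real.log (2 * n - 1) - (Real.log 2 + Real.log n) := by
    rw [show (1 : ℝ) - 1 / (2 * n) = (2 * n - 1) / (2 * n) by field_simp,
      Real.log_div (by intro h; nlinarith) (by positivity),
      Real.log_mul two_ne_zero hn0.ne']
  rw [l1, l2] at hcore
  have hc2 : (2 * n + 1) * (Real.log (2 * n + 1) - (Real.log 2 + Real.log n))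
      - (2 * n - 1) * (Real.log (2 * n - 1) - (Real.log 2 + Real.log n)) ≤ 2 := by
    calc (2 * n + 1) * (Real.log (2 * n + 1) - (Real.log 2 + Real.log n))
          - (2 * n - 1) * (Real.log (2 * n - 1) - (Real.log 2 + Real.log n))
        = (2 * n) * ((1 + 1 / (2 * n)) * (Real.log (2 * n + 1) - (Real.log 2 + Real.log n))
          - (1 - 1 / (2 * n)) * (Real.log (2 * n - 1) - (Real.log 2 + Real.log n))) := by
          field_simp
      _ ≤ (2 * n) * (2 * (1 / (2 * n))) := mul_le_mul_of_nonneg_left hcore h2n.le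
      _ = 2 := by field_simp
  have g1 : Real.log (n + 1/2) = Real.log (2 * n + 1) - Real.log 2 := by
    rw [show n + 1/2 = (2 * n + 1) / 2 by ring, Real.log_div (by positivity) two_ne_zero]
  have g2 : Real.log (n - 1/2) = Real.log (2 * n - 1) - Real.log 2 := by
    rw [show n - 1/2 = (2 * n - 1) / 2 by ring,
      Real.log_div (by intro h; nlinarith) two_ne_zero]
  rw [g1, g2]
  nlinarith [hc2]

private lemma key_rpow (n : ℝ) (hn : 1 ≤ n) :
    (n + 1/2) ^ (n + 1/2 : ℝ) ≤ Real.exp 1 * n * (n - 1/2) ^ (n - 1/2 : ℝ) := by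
  have hn0 : (0:ℝ) < n := by linarith
  have hp1 : (0:ℝ) < n + 1/2 := by linarith
  have hp2 : (0:ℝ) < n - 1/2 := by linarith
  have hL : (0:ℝ) < (n + 1/2) ^ (n + 1/2 : ℝ) := Real.rpow_pos_of_pos hp1 _
  have hR : (0:ℝ) < Real.exp 1 * n * (n - 1/2) ^ (n - 1/2 : ℝ) := by
    have := Real.rpow_pos_of_pos hp2 (n - 1/2 : ℝ); positivity
  rw [← Real.exp_log hL, ← Real.exp_log hR]
  apply Real.exp_le_exp.mpr
  rw [Real.log_rpow hp1, Real.log_mul (by positivity) (Real.rpow_pos_of_pos hp2 _).ne',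
    Real.log_mul (Real.exp_pos 1).ne' hn0.ne', Real.log_exp, Real.log_rpow hp2]
  exact key_log n hn

private lemma factorial_lower (i : ℕ) :
    Real.sqrt 2 * ((i : ℝ) + 1/2) ^ ((i : ℝ) + 1/2) * Real.exp (-(i : ℝ))
      ≤ (Nat.factorial i : ℝ) := by
  induction i with
  | zero =>
      simp only [Nat.cast_zero, Nat.factorial_zero, Nat.cast_one]
      rw [zero_add, neg_zero, Real.exp_zero, mul_one]
      rw [show ((1:ℝ)/2) ^ ((1:ℝ)/2) = Real.sqrt (1/2) by
        rw [Real.sqrt_eq_rpow]]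
      rw [← Real.sqrt_mul (by norm_num)]
      norm_num
  | succ i ih =>
      have hn : (1:ℝ) ≤ (i : ℝ) + 1 := by
        have : (0:ℝ) ≤ (i:ℝ) := Nat.cast_nonneg i
        linarith
      have hkey := key_rpow ((i : ℝ) + 1) hn
      have e1 : ((i : ℝ) + 1) - 1/2 = (i : ℝ) + 1/2 := by ring
      rw [e1] at hkey
      have hpos : (0:ℝ) ≤ Real.sqrt 2 * Real.exp (-(((i:ℝ)+1))) := by positivity
      have step1 : Real.sqrt 2 * (((i:ℝ)+1) + 1/2) ^ (((i:ℝ)+1) + 1/2) * Real.exp (-((i:ℝ)+1))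
          ≤ ((i:ℝ)+1) * (Real.sqrt 2 * ((i : ℝ) + 1/2) ^ ((i : ℝ) + 1/2) * Real.exp (-(i : ℝ))) := by
        have h2 : Real.exp 1 * Real.exp (-((i:ℝ)+1)) = Real.exp (-(i:ℝ)) := by
          rw [← Real.exp_add]; ring_nf
        calc Real.sqrt 2 * (((i:ℝ)+1) + 1/2) ^ (((i:ℝ)+1) + 1/2) * Real.exp (-((i:ℝ)+1))
            ≤ Real.sqrt 2 * (Real.exp 1 * ((i:ℝ)+1) * ((i : ℝ) + 1/2) ^ ((i : ℝ) + 1/2))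
              * Real.exp (-((i:ℝ)+1)) := by
              have := mul_le_mul_of_nonneg_left hkey (Real.sqrt_nonneg 2)
              exact mul_le_mul_of_nonneg_right this (Real.exp_pos _).le
          _ = ((i:ℝ)+1) * (Real.sqrt 2 * ((i : ℝ) + 1/2) ^ ((i : ℝ) + 1/2) *
              (Real.exp 1 * Real.exp (-((i:ℝ)+1)))) := by ring
          _ = ((i:ℝ)+1) * (Real.sqrt 2 * ((i : ℝ) + 1/2) ^ ((i : ℝ) + 1/2) * Real.exp (-(i:ℝ))) := by
              rw [h2]
      have step2 : ((i:ℝ)+1) * (Real.sqrt 2 * ((i : ℝ) + 1/2) ^ ((i : ℝ) + 1/2) * Real.exp (-(i : ℝ)))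
          ≤ ((i:ℝ)+1) * (Nat.factorial i : ℝ) :=
        mul_le_mul_of_nonneg_left ih (by positivity)
      have : Real.sqrt 2 * (((i:ℝ)+1) + 1/2) ^ (((i:ℝ)+1) + 1/2) * Real.exp (-((i:ℝ)+1))
          ≤ ((i:ℝ)+1) * (Nat.factorial i : ℝ) := le_trans step1 step2
      rw [Nat.factorial_succ]
      push_cast
      convert this using 3 <;> push_cast <;> ring

private lemma max_rpow (a x : ℝ) (ha : 0 < a) (hx : 0 < x) :
    x ^ (a : ℝ) * Real.exp (-x) ≤ a ^ (a : ℝ) * Real.exp (-a) := by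
  have hL : (0:ℝ) < x ^ (a : ℝ) * Real.exp (-x) :=
    mul_pos (Real.rpow_pos_of_pos hx _) (Real.exp_pos _)
  have hR : (0:ℝ) < a ^ (a : ℝ) * Real.exp (-a) :=
    mul_pos (Real.rpow_pos_of_pos ha _) (Real.exp_pos _)
  rw [← Real.exp_log hL, ← Real.exp_log hR]
  apply Real.exp_le_exp.mpr
  rw [Real.log_mul (Real.rpow_pos_of_pos hx _).ne' (Real.exp_pos _).ne',
    Real.log_mul (Real.rpow_pos_of_pos ha _).ne' (Real.exp_pos _).ne',
    Real.log_exp, Real.log_exp, Real.log_rpow hx, Real.log_rpow ha]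
  have hdiv : (0:ℝ) < x / a := by positivity
  have h1 : Real.log (x / a) ≤ x / a - 1 := Real.log_le_sub_one_of_pos hdiv
  have h2 : Real.log (x / a) = Real.log x - Real.log a := Real.log_div hx.ne' ha.ne'
  rw [h2] at h1
  have h3 := mul_le_mul_of_nonneg_left h1 ha.le
  have h4 : a * (x / a - 1) = x - a := by field_simp
  nlinarith [h3]

theorem single_poisson_bound (x : ℝ) (hx : 0 ≤ x) (i : ℕ) :
    Real.sqrt x * (Real.exp (-x) * x ^ i / (Nat.factorial i : ℝ))
      ≤ 1 / Real.sqrt (2 * Real.exp 1) := by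
  have hfac : (0:ℝ) < (Nat.factorial i : ℝ) := by
    exact_mod_cast Nat.factorial_pos i
  have hRpos : (0:ℝ) < 1 / Real.sqrt (2 * Real.exp 1) := by
    have : (0:ℝ) < 2 * Real.exp 1 := by positivity
    positivity
  rcases eq_or_lt_of_le hx with rfl | hx0
  · rw [Real.sqrt_zero, zero_mul]; exact hRpos.le
  have hsq : Real.sqrt x * x ^ i = x ^ ((i : ℝ) + 1/2) := by
    rw [Real.rpow_add hx0, Real.rpow_natCast, Real.sqrt_eq_rpow]
    ring
  have ha : (0:ℝ) < (i : ℝ) + 1/2 := by positivity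
  have hmax := max_rpow ((i : ℝ) + 1/2) x ha hx0
  have hfl := factorial_lower i
  have hexp : Real.exp (-((i : ℝ) + 1/2)) = Real.exp (-(i:ℝ)) * Real.exp (-(1/2 : ℝ)) := by
    rw [← Real.exp_add]; ring_nf
  have hsqrt2 : (0:ℝ) < Real.sqrt 2 := by positivity
  have hnum' : ((i:ℝ)+1/2) ^ ((i:ℝ)+1/2) * Real.exp (-(i:ℝ))
      ≤ (Nat.factorial i : ℝ) / Real.sqrt 2 := by
    rw [le_div_iff₀ hsqrt2]
    calc ((i:ℝ)+1/2) ^ ((i:ℝ)+1/2) * Real.exp (-(i:ℝ)) * Real.sqrt 2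
        = Real.sqrt 2 * ((i:ℝ)+1/2) ^ ((i:ℝ)+1/2) * Real.exp (-(i:ℝ)) := by ring
      _ ≤ (Nat.factorial i : ℝ) := hfl
  have hnum : x ^ ((i : ℝ) + 1/2) * Real.exp (-x)
      ≤ (Nat.factorial i : ℝ) / Real.sqrt 2 * Real.exp (-(1/2 : ℝ)) := by
    refine hmax.trans ?_
    rw [hexp, ← mul_assoc]
    exact mul_le_mul_of_nonneg_right hnum' (Real.exp_pos _).le
  have hse : Real.sqrt (Real.exp 1) = Real.exp (1/2 : ℝ) := by
    rw [show Real.exp 1 = Real.exp (1/2 : ℝ) ^ 2 by rw [sq, ← Real.exp_add]; norm_num]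
    exact Real.sqrt_sq (Real.exp_pos _).le
  have hRe : 1 / Real.sqrt (2 * Real.exp 1) = Real.exp (-(1/2 : ℝ)) / Real.sqrt 2 := by
    rw [Real.sqrt_mul (by norm_num) _, hse, Real.exp_neg]
    field_simp
  have hLHS : Real.sqrt x * (Real.exp (-x) * x ^ i / (Nat.factorial i : ℝ))
      = x ^ ((i : ℝ) + 1/2) * Real.exp (-x) / (Nat.factorial i : ℝ) := by
    rw [← hsq]; ring
  rw [hLHS, hRe]
  calc x ^ ((i : ℝ) + 1/2) * Real.exp (-x) / (Nat.factorial i : ℝ)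
      ≤ ((Nat.factorial i : ℝ) / Real.sqrt 2 * Real.exp (-(1/2 : ℝ))) / (Nat.factorial i : ℝ) := by
        gcongr
    _ = Real.exp (-(1/2 : ℝ)) / Real.sqrt 2 := by
        field_simp
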